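/- Gallager-form leftover-hash bound: Under the same assumptions as the ε-almost universal₂ hashing setup, for any s ∈ [0,1], exp((s/(1+s)) · C^↑_{1+s}(f_X(A)|E,X)) ≤ ε^{s/(1+s)} + M^{s/(1+s)} exp(-(s/(1+s)) H^↑_{1+s}(A|E|P_{AE})), where exp(-(s/(1+s)) H^↑_{1+s}(f_X(A)|E,X)) := E_X ∑_e P_E(e) (∑_{i=1}^M (∑_{a∈f_X^{-1}(i)} P_{A|E}(a|e))^{1+s})^{1/(1+s)} and C^↑_{1+s} := log M - H^↑_{1+s}. -/

import Mathlib

open Finset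

private lemma rpow_add_le_add_rpow' {x y p : ℝ} (hx : 0 ≤ x) (hy : 0 ≤ y)
    (hp : 0 ≤ p) (hp1 : p ≤ 1) : (x + y) ^ p ≤ x ^ p + y ^ p := by
  have h := NNReal.rpow_add_le_add_rpow x.toNNReal y.toNNReal hp hp1
  have h2 := NNReal.coe_le_coe.2 h
  push_cast at h2
  rwa [Real.coe_toNNReal x hx, Real.coe_toNNReal y hy] at h2

private lemma jensen_rpow {X : Type*} [Fintype X] (w Z : X → ℝ) (hw : ∀ x, 0 ≤ w x)
    (hwsum : ∑ x, w x = 1) (hZ : ∀ x, 0 ≤ Z x) {c : ℝ} (hc : 0 < c) (hc1 : c ≤ 1) :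
    ∑ x, w x * Z x ^ c ≤ (∑ x, w x * Z x) ^ c := by
  have hp : 1 ≤ 1 / c := by rw [le_div_iff₀ hc]; linarith
  have h := Real.arith_mean_le_rpow_mean Finset.univ w (fun x => Z x ^ c)
    (fun x _ => hw x) hwsum (fun x _ => Real.rpow_nonneg (hZ x) c) hp
  calc ∑ x, w x * Z x ^ c ≤ (∑ x, w x * (Z x ^ c) ^ (1 / c)) ^ (1 / (1 / c)) := h
    _ = (∑ x, w x * Z x) ^ c := by
        rw [one_div_one_div]
        congr 1
        refine Finset.sum_congr rfl fun x _ => ?_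
        rw [← Real.rpow_mul (hZ x), mul_one_div, div_self hc.ne', Real.rpow_one]

/-- Gallager-form leftover-hash bound: for an `ε`-almost universal₂ random hash
`f_X` into `{1,…,M}` and `s ∈ (0,1]`,
`exp((s/(1+s))·C↑_{1+s}(f_X(A)|E,X)) ≤ ε^{s/(1+s)} + M^{s/(1+s)} exp(-(s/(1+s)) H↑_{1+s}(A|E|P_{AE}))`. -/
theorem leftover_hash_renyi_gallager {A E X : Type*} [Fintype A] [Fintype E] [Fintype X]
    (M : ℕ) (hM : 0 < M) (f : X → A → Fin M)
    (μ : X → ℝ) (hμ : ∀ x, 0 ≤ μ x) (hμsum : ∑ x, μ x = 1)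
    (ε : ℝ) (hε : 0 ≤ ε)
    (huniv : ∀ a₁ a₂ : A, a₁ ≠ a₂ →
      ∑ x ∈ Finset.univ.filter (fun x => f x a₁ = f x a₂), μ x ≤ ε / M)
    (PE : E → ℝ) (hPE : ∀ e, 0 ≤ PE e) (hPEsum : ∑ e, PE e = 1)
    (PA : A → E → ℝ) (hPA : ∀ a e, 0 ≤ PA a e) (hPAsum : ∀ e, ∑ a, PA a e = 1)
    (s : ℝ) (hs : 0 < s) (hs1 : s ≤ 1) :
    (M : ℝ) ^ (s/(1 + s)) * (∑ x, μ x * ∑ e, PE e *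
        (∑ i : Fin M,
          (∑ a ∈ Finset.univ.filter (fun a => f x a = i), PA a e) ^ (1 + s))
            ^ (1/(1 + s))) ≤
      ε ^ (s/(1 + s)) + (M : ℝ) ^ (s/(1 + s)) *
        ∑ e, PE e * (∑ a, PA a e ^ (1 + s)) ^ (1/(1 + s)) := by
  classical
  have h1s : (0:ℝ) < 1 + s := by linarith
  have hr0 : 0 < 1/(1+s) := by positivity
  have hr1 : 1/(1+s) ≤ 1 := by rw [div_le_one h1s]; linarith
  have hM0 : (0:ℝ) < M := by exact_mod_cast hM
  set C : X → A → E → ℝ :=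
    fun x a e => ∑ a' ∈ Finset.univ.erase a, (if f x a' = f x a then PA a' e else 0) with hC
  have hCnn : ∀ x a e, 0 ≤ C x a e := by
    intro x a e
    refine Finset.sum_nonneg fun a' _ => ?_
    split
    · exact hPA a' e
    · exact le_rfl
  set D : E → ℝ := fun e => ∑ a, PA a e ^ (1 + s) with hD
  set Z : X → E → ℝ := fun x e => ∑ a, PA a e * (C x a e) ^ s with hZ
  have hDnn : ∀ e, 0 ≤ D e := fun e =>
    Finset.sum_nonneg fun a _ => Real.rpow_nonneg (hPA a e) _
  have hZnn : ∀ x e, 0 ≤ Z x e := fun x e =>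
    Finset.sum_nonneg fun a _ => mul_nonneg (hPA a e) (Real.rpow_nonneg (hCnn x a e) _)
  -- Step A: fiber-sum bound
  have stepA : ∀ x e, ∑ i : Fin M,
      (∑ a ∈ Finset.univ.filter (fun a => f x a = i), PA a e) ^ (1 + s) ≤ D e + Z x e := by
    intro x e
    have hfib : ∀ i : Fin M,
        (∑ a ∈ Finset.univ.filter (fun a => f x a = i), PA a e) ^ (1 + s)
        = ∑ a ∈ Finset.univ.filter (fun a => f x a = i),
            PA a e * (∑ a' ∈ Finset.univ.filter (fun a' => f x a' = i), PA a' e) ^ s := by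
      intro i
      rw [Real.rpow_add' (Finset.sum_nonneg fun a _ => hPA a e) (by linarith),
        Real.rpow_one, Finset.sum_mul]
    calc ∑ i : Fin M, (∑ a ∈ Finset.univ.filter (fun a => f x a = i), PA a e) ^ (1 + s)
        = ∑ i : Fin M, ∑ a ∈ Finset.univ.filter (fun a => f x a = i),
            PA a e * (∑ a' ∈ Finset.univ.filter (fun a' => f x a' = i), PA a' e) ^ s :=
          Finset.sum_congr rfl fun i _ => hfib i
      _ ≤ ∑ i : Fin M, ∑ a ∈ Finset.univ.filter (fun a => f x a = i),
            PA a e * (PA a e ^ s + C x a e ^ s) := by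
          refine Finset.sum_le_sum fun i _ => Finset.sum_le_sum fun a ha => ?_
          have hai : f x a = i := by simpa using ha
          have hsplit : ∑ a' ∈ Finset.univ.filter (fun a' => f x a' = i), PA a' e
              = PA a e + C x a e := by
            rw [← Finset.add_sum_erase _ _ ha]
            congr 1
            rw [← Finset.filter_erase, Finset.sum_filter, hC]
            simp [hai]
          refine mul_le_mul_of_nonneg_left ?_ (hPA a e)
          rw [hsplit]
          exact rpow_add_le_add_rpow' (hPA a e) (hCnn x a e) hs.le hs1
      _ = ∑ a, PA a e * (PA a e ^ s + C x a e ^ s) :=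
          Finset.sum_fiberwise _ (fun a => f x a) _
      _ = D e + Z x e := by
          rw [hD, hZ, ← Finset.sum_add_distrib]
          refine Finset.sum_congr rfl fun a _ => ?_
          rw [mul_add]
          congr 1
          rw [Real.rpow_add' (hPA a e) (by linarith), Real.rpow_one]
  -- Step E: collision-probability bound
  have stepE : ∀ e, ∑ x, μ x * Z x e ≤ (ε / M) ^ s := by
    intro e
    have hCbound : ∀ a, ∑ x, μ x * C x a e ≤ ε / M := by
      intro a
      have : ∑ x, μ x * C x a e
          = ∑ a' ∈ Finset.univ.erase a,
              PA a' e * ∑ x ∈ Finset.univ.filter (fun x => f x a' = f x a), μ x := by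
        rw [hC]
        simp only [Finset.mul_sum]
        rw [Finset.sum_comm]
        refine Finset.sum_congr rfl fun a' _ => ?_
        simp only [Finset.sum_filter, Finset.mul_sum]
        refine Finset.sum_congr rfl fun x _ => ?_
        split <;> ring
      rw [this]
      calc ∑ a' ∈ Finset.univ.erase a,
            PA a' e * ∑ x ∈ Finset.univ.filter (fun x => f x a' = f x a), μ x
          ≤ ∑ a' ∈ Finset.univ.erase a, PA a' e * (ε / M) := by
            refine Finset.sum_le_sum fun a' ha' => ?_
            exact mul_le_mul_of_nonneg_left
              (huniv a' a (Finset.ne_of_mem_erase ha')) (hPA a' e)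
        _ = (∑ a' ∈ Finset.univ.erase a, PA a' e) * (ε / M) := by rw [Finset.sum_mul]
        _ ≤ 1 * (ε / M) := by
            refine mul_le_mul_of_nonneg_right ?_ (by positivity)
            calc ∑ a' ∈ Finset.univ.erase a, PA a' e
                ≤ ∑ a', PA a' e :=
                  Finset.sum_le_sum_of_subset_of_nonneg (Finset.erase_subset _ _)
                    (fun a' _ _ => hPA a' e)
              _ = 1 := hPAsum e
        _ = ε / M := one_mul _
    calc ∑ x, μ x * Z x e
        = ∑ a, PA a e * ∑ x, μ x * C x a e ^ s := by
          simp only [hZ, Finset.mul_sum]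
          rw [Finset.sum_comm]
          exact Finset.sum_congr rfl fun a _ => Finset.sum_congr rfl fun x _ => by ring
      _ ≤ ∑ a, PA a e * (ε / M) ^ s := by
          refine Finset.sum_le_sum fun a _ => mul_le_mul_of_nonneg_left ?_ (hPA a e)
          calc ∑ x, μ x * C x a e ^ s ≤ (∑ x, μ x * C x a e) ^ s :=
                jensen_rpow μ (fun x => C x a e) hμ hμsum (fun x => hCnn x a e) hs hs1
            _ ≤ (ε / M) ^ s :=
                Real.rpow_le_rpow
                  (Finset.sum_nonneg fun x _ => mul_nonneg (hμ x) (hCnn x a e))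
                  (hCbound a) hs.le
      _ = (∑ a, PA a e) * (ε / M) ^ s := by rw [Finset.sum_mul]
      _ = (ε / M) ^ s := by rw [hPAsum e, one_mul]
  -- Combine
  have main : ∑ x, μ x * ∑ e, PE e *
      (∑ i : Fin M, (∑ a ∈ Finset.univ.filter (fun a => f x a = i), PA a e) ^ (1 + s))
        ^ (1/(1 + s))
      ≤ (∑ e, PE e * D e ^ (1/(1 + s))) + (ε / M) ^ (s/(1 + s)) := by
    calc ∑ x, μ x * ∑ e, PE e *
          (∑ i : Fin M, (∑ a ∈ Finset.univ.filter (fun a => f x a = i), PA a e) ^ (1 + s))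
            ^ (1/(1 + s))
        ≤ ∑ x, μ x * ∑ e, PE e * (D e ^ (1/(1 + s)) + Z x e ^ (1/(1 + s))) := by
          refine Finset.sum_le_sum fun x _ => mul_le_mul_of_nonneg_left
            (Finset.sum_le_sum fun e _ => mul_le_mul_of_nonneg_left ?_ (hPE e)) (hμ x)
          calc (∑ i : Fin M,
                (∑ a ∈ Finset.univ.filter (fun a => f x a = i), PA a e) ^ (1 + s))
                  ^ (1/(1 + s))
              ≤ (D e + Z x e) ^ (1/(1 + s)) :=
                Real.rpow_le_rpow
                  (Finset.sum_nonneg fun i _ =>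
                    Real.rpow_nonneg (Finset.sum_nonneg fun a _ => hPA a e) _)
                  (stepA x e) hr0.le
            _ ≤ D e ^ (1/(1 + s)) + Z x e ^ (1/(1 + s)) :=
                rpow_add_le_add_rpow' (hDnn e) (hZnn x e) hr0.le hr1
      _ = (∑ e, PE e * D e ^ (1/(1 + s))) + ∑ e, PE e * ∑ x, μ x * Z x e ^ (1/(1 + s)) := by
          have h1 : ∀ x, μ x * ∑ e, PE e * (D e ^ (1/(1 + s)) + Z x e ^ (1/(1 + s)))
              = (∑ e, μ x * (PE e * D e ^ (1/(1 + s))))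
                + ∑ e, PE e * (μ x * Z x e ^ (1/(1 + s))) := by
            intro x
            rw [Finset.mul_sum, ← Finset.sum_add_distrib]
            exact Finset.sum_congr rfl fun e _ => by ring
          simp only [h1]
          rw [Finset.sum_add_distrib]
          congr 1
          · rw [Finset.sum_comm]
            refine Finset.sum_congr rfl fun e _ => ?_
            have : ∀ x, μ x * (PE e * D e ^ (1/(1 + s)))
                = (PE e * D e ^ (1/(1 + s))) * μ x := fun x => by ring
            simp only [this]
            rw [← Finset.mul_sum, hμsum, mul_one, mul_comm]
          · rw [Finset.sum_comm]
            refine Finset.sum_congr rfl fun e _ => ?_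
            rw [Finset.mul_sum]
      _ ≤ (∑ e, PE e * D e ^ (1/(1 + s))) + ∑ e, PE e * (ε / M) ^ (s/(1 + s)) := by
          refine add_le_add_right (Finset.sum_le_sum fun e _ =>
            mul_le_mul_of_nonneg_left ?_ (hPE e)) _
          calc ∑ x, μ x * Z x e ^ (1/(1 + s)) ≤ (∑ x, μ x * Z x e) ^ (1/(1 + s)) :=
                jensen_rpow μ (fun x => Z x e) hμ hμsum (fun x => hZnn x e) hr0 hr1
            _ ≤ ((ε / M) ^ s) ^ (1/(1 + s)) :=
                Real.rpow_le_rpow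
                  (Finset.sum_nonneg fun x _ => mul_nonneg (hμ x) (hZnn x e))
                  (stepE e) hr0.le
            _ = (ε / M) ^ (s/(1 + s)) := by
                rw [← Real.rpow_mul (by positivity), mul_one_div]
      _ = (∑ e, PE e * D e ^ (1/(1 + s))) + (ε / M) ^ (s/(1 + s)) := by
          rw [← Finset.sum_mul, hPEsum, one_mul]
  have hfinal : (M:ℝ) ^ (s/(1 + s)) * (ε / M) ^ (s/(1 + s)) = ε ^ (s/(1 + s)) := by
    rw [← Real.mul_rpow hM0.le (by positivity)]
    congr 1
    field_simp
  have hMpow : (0:ℝ) ≤ (M:ℝ) ^ (s/(1 + s)) := Real.rpow_nonneg hM0.le _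
  calc (M : ℝ) ^ (s/(1 + s)) * (∑ x, μ x * ∑ e, PE e *
        (∑ i : Fin M,
          (∑ a ∈ Finset.univ.filter (fun a => f x a = i), PA a e) ^ (1 + s))
            ^ (1/(1 + s)))
      ≤ (M : ℝ) ^ (s/(1 + s)) *
          ((∑ e, PE e * D e ^ (1/(1 + s))) + (ε / M) ^ (s/(1 + s))) :=
        mul_le_mul_of_nonneg_left main hMpow
    _ = ε ^ (s/(1 + s)) + (M : ℝ) ^ (s/(1 + s)) *
          ∑ e, PE e * (∑ a, PA a e ^ (1 + s)) ^ (1/(1 + s)) := by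
        rw [mul_add, hfinal, add_comm]
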